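/- For every integer k ≥ 2, the graph G on vertex set Z/(3k−1)Z, in which distinct vertices i and j are adjacent if and only if j − i is congruent modulo 3k−1 to one of k, k+1, …, 2k−1, has vertex-connectivity exactly k; in particular, between any two distinct nonadjacent vertices of G there exist k pairwise internally vertex-disjoint paths. -/
import Mathlib

/-- The circulant graph on `ZMod (3*k-1)` in which distinct `i`, `j` are adjacent
iff `j - i` is congruent mod `3*k-1` to one of `k, k+1, …, 2*k-1`. -/
def paperCirculant (k : ℕ) : SimpleGraph (ZMod (3 * k - 1)) :=
  SimpleGraph.fromRel (fun i j => (j - i).val ∈ Finset.Icc k (2 * k - 1))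

/-- `G` has vertex-connectivity exactly `n`: some set of `n` vertices disconnects `G`
(i.e. the graph induced on the complement is not connected), and no smaller set does. -/
def HasVertexConnectivity {V : Type*} (G : SimpleGraph V) (n : ℕ) : Prop :=
  (∃ S : Set V, S.ncard = n ∧ ¬(G.induce Sᶜ).Connected) ∧
    ∀ S : Set V, S.ncard < n → (G.induce Sᶜ).Connected

open SimpleGraph

namespace Stmt5Aux

lemma cast_inj_of_lt {k : ℕ} (hk : 2 ≤ k) {a b : ℕ} (ha : a < 3*k-1) (hb : b < 3*k-1)
    (h : ((a : ℕ) : ZMod (3*k-1)) = ((b : ℕ) : ZMod (3*k-1))) : a = b := by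
  haveI : NeZero (3*k-1) := ⟨by omega⟩
  have := congrArg ZMod.val h
  rwa [ZMod.val_cast_of_lt ha, ZMod.val_cast_of_lt hb] at this

lemma add_cast_ne {k : ℕ} (hk : 2 ≤ k) (x : ZMod (3*k-1)) {a b : ℕ}
    (ha : a < 3*k-1) (hb : b < 3*k-1) (hne : a ≠ b) :
    x + ((a : ℕ) : ZMod (3*k-1)) ≠ x + ((b : ℕ) : ZMod (3*k-1)) :=
  fun h => hne (cast_inj_of_lt hk ha hb (add_left_cancel h))

lemma adj_of_val {k : ℕ} (hk : 2 ≤ k) {u v : ZMod (3*k-1)}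
    (h : (v - u).val ∈ Finset.Icc k (2*k-1)) : (paperCirculant k).Adj u v := by
  haveI : NeZero (3*k-1) := ⟨by omega⟩
  have hne : u ≠ v := by
    intro he
    rw [he, sub_self, ZMod.val_zero, Finset.mem_Icc] at h
    omega
  rw [paperCirculant, SimpleGraph.fromRel_adj]
  exact ⟨hne, Or.inl h⟩

lemma val_diff {k : ℕ} (hk : 2 ≤ k) (x : ZMod (3*k-1)) (a b : ℕ) (ha : a ≤ 3*k-1) :
    ((x + ((b : ℕ) : ZMod (3*k-1))) - (x + ((a : ℕ) : ZMod (3*k-1)))).val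
      = (b + (3*k-1) - a) % (3*k-1) := by
  haveI : NeZero (3*k-1) := ⟨by omega⟩
  have h1 : (x + ((b : ℕ) : ZMod (3*k-1))) - (x + ((a : ℕ) : ZMod (3*k-1)))
      = ((b + (3*k-1) - a : ℕ) : ZMod (3*k-1)) := by
    rw [Nat.cast_sub (by omega : a ≤ b + (3*k-1)), Nat.cast_add, ZMod.natCast_self, add_zero]
    ring
  rw [h1, ZMod.val_natCast]

lemma path2 {V : Type*} {G : SimpleGraph V} {x m y : V} (h1 : G.Adj x m) (h2 : G.Adj m y)
    (hxy : x ≠ y) : ∃ P : G.Path x y, P.1.support = [x, m, y] :=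
  ⟨⟨Walk.cons h1 (Walk.cons h2 Walk.nil), by
    simp [Walk.isPath_def, h1.ne, h2.ne, hxy]⟩, by simp⟩

lemma path3 {V : Type*} {G : SimpleGraph V} {x m1 m2 y : V} (h1 : G.Adj x m1)
    (h2 : G.Adj m1 m2) (h3 : G.Adj m2 y) (hxm2 : x ≠ m2) (hxy : x ≠ y) (hm1y : m1 ≠ y) :
    ∃ P : G.Path x y, P.1.support = [x, m1, m2, y] :=
  ⟨⟨Walk.cons h1 (Walk.cons h2 (Walk.cons h3 Walk.nil)), by
    simp [Walk.isPath_def, h1.ne, h2.ne, h3.ne, hxm2, hxy, hm1y]⟩, by simp⟩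

/-- Core construction: `k` internally disjoint paths when `(y-x).val ∈ [1, k-1]`. -/
lemma core {k : ℕ} (hk : 2 ≤ k) (x y : ZMod (3*k-1))
    (hd1 : 1 ≤ (y - x).val) (hd2 : (y - x).val ≤ k - 1) :
    ∃ P : Fin k → (paperCirculant k).Path x y,
      ∀ i j : Fin k, i ≠ j →
        ∀ v, v ∈ (P i).1.support → v ∈ (P j).1.support → v = x ∨ v = y := by
  haveI : NeZero (3*k-1) := ⟨by omega⟩
  set d := (y - x).val with hdd
  have hy : y = x + ((d : ℕ) : ZMod (3*k-1)) := by
    have h0 : ((d : ℕ) : ZMod (3*k-1)) = y - x := ZMod.natCast_rightInverse _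
    rw [h0]; ring
  have hxy : x ≠ y := by
    rw [hy]
    intro hEq
    have h1 : ((d : ℕ) : ZMod (3*k-1)) = ((0 : ℕ) : ZMod (3*k-1)) := by
      have := (left_eq_add).mp hEq
      simpa using this
    have := cast_inj_of_lt hk (by omega) (by omega) h1
    omega
  have key : ∀ i : Fin k, ∃ P : (paperCirculant k).Path x y,
      ∀ v ∈ P.1.support, v = x ∨ v = y ∨ v = x + ((k + i.val : ℕ) : ZMod (3*k-1)) ∨
        (i.val < d ∧ v = x + ((2*k + i.val : ℕ) : ZMod (3*k-1))) := by
    intro i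
    have hi := i.2
    have e1 : (paperCirculant k).Adj x (x + ((k + i.val : ℕ) : ZMod (3*k-1))) := by
      apply adj_of_val hk
      rw [add_sub_cancel_left, ZMod.val_natCast, Nat.mod_eq_of_lt (by omega), Finset.mem_Icc]
      omega
    rcases le_or_gt d i.val with hcase | hcase
    · -- two-edge path x, x+(k+i), y
      have e2 : (paperCirculant k).Adj (x + ((k + i.val : ℕ) : ZMod (3*k-1))) y := by
        rw [hy]
        apply adj_of_val hk
        rw [val_diff hk x (k + i.val) d (by omega), Nat.mod_eq_of_lt (by omega), Finset.mem_Icc]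
        omega
      obtain ⟨P, hP⟩ := path2 e1 e2 hxy
      refine ⟨P, ?_⟩
      rw [hP]
      intro v hv
      simp only [List.mem_cons, List.not_mem_nil, or_false] at hv
      tauto
    · -- three-edge path x, x+(k+i), x+(2k+i), y
      have e2 : (paperCirculant k).Adj (x + ((k + i.val : ℕ) : ZMod (3*k-1)))
          (x + ((2*k + i.val : ℕ) : ZMod (3*k-1))) := by
        apply adj_of_val hk
        rw [val_diff hk x (k + i.val) (2*k + i.val) (by omega)]
        have h2 : 2*k + i.val + (3*k-1) - (k + i.val) = k + (3*k-1) := by omega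
        rw [h2, Nat.add_mod_right, Nat.mod_eq_of_lt (by omega), Finset.mem_Icc]
        omega
      have e3 : (paperCirculant k).Adj (x + ((2*k + i.val : ℕ) : ZMod (3*k-1))) y := by
        rw [hy]
        apply adj_of_val hk
        rw [val_diff hk x (2*k + i.val) d (by omega), Nat.mod_eq_of_lt (by omega), Finset.mem_Icc]
        omega
      have hxm2 : x ≠ x + ((2*k + i.val : ℕ) : ZMod (3*k-1)) := by
        have := add_cast_ne hk x (show (0:ℕ) < 3*k-1 by omega)
          (show 2*k + i.val < 3*k-1 by omega) (by omega)
        simpa using this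
      have hm1y : x + ((k + i.val : ℕ) : ZMod (3*k-1)) ≠ y := by
        rw [hy]
        exact add_cast_ne hk x (by omega) (by omega) (by omega)
      obtain ⟨P, hP⟩ := path3 e1 e2 e3 hxm2 hxy hm1y
      refine ⟨P, ?_⟩
      rw [hP]
      intro v hv
      simp only [List.mem_cons, List.not_mem_nil, or_false] at hv
      rcases hv with h | h | h | h
      · exact Or.inl h
      · exact Or.inr (Or.inr (Or.inl h))
      · exact Or.inr (Or.inr (Or.inr ⟨hcase, h⟩))
      · exact Or.inr (Or.inl h)
  choose P hP using key
  refine ⟨P, ?_⟩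
  intro i j hij v hvi hvj
  have hij' : i.val ≠ j.val := fun h => hij (Fin.ext h)
  have hi := i.2
  have hj := j.2
  rcases hP i v hvi with h1 | h1 | h1 | ⟨hid, h1⟩ <;>
    rcases hP j v hvj with h2 | h2 | h2 | ⟨hjd, h2⟩
  all_goals first
    | exact Or.inl ‹v = x›
    | exact Or.inr ‹v = y›
    | (exfalso; rw [h1] at h2;
       exact add_cast_ne hk x (by omega) (by omega) (by omega) h2)

/-- reachability in induced subgraph from a walk avoiding the removed set -/
lemma reach_induce {V : Type*} {G : SimpleGraph V} (T : Set V) :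
    ∀ {u v : V} (w : G.Walk u v), (∀ x ∈ w.support, x ∈ T) →
      ∀ (hu : u ∈ T) (hv : v ∈ T), (G.induce T).Reachable ⟨u, hu⟩ ⟨v, hv⟩ := by
  intro u v w
  induction w with
  | nil => intro _ hu hv; rfl
  | @cons u m v h p ih =>
    intro hsup hu hv
    have hm : m ∈ T := hsup m (by simp)
    have hadj : (G.induce T).Adj ⟨u, hu⟩ ⟨m, hm⟩ := by
      simp [comap_adj, h]
    exact (hadj.reachable).trans (ih (fun x hx => hsup x (by simp [hx])) hm hv)

lemma eq_of_reachable_of_isolated {V : Type*} {H : SimpleGraph V} {u v : V}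
    (h : ∀ w, ¬H.Adj u w) (hr : H.Reachable u v) : u = v := by
  obtain ⟨w⟩ := hr
  cases w with
  | nil => rfl
  | cons ha _ => exact absurd ha (h _)

/-- the "k disjoint paths" part, as a lemma -/
lemma part2 {k : ℕ} (hk : 2 ≤ k) (x y : ZMod (3*k-1)) (hxy : x ≠ y)
    (hadj : ¬(paperCirculant k).Adj x y) :
    ∃ P : Fin k → (paperCirculant k).Path x y,
      ∀ i j : Fin k, i ≠ j →
        ∀ v, v ∈ (P i).1.support → v ∈ (P j).1.support → v = x ∨ v = y := by
  haveI : NeZero (3*k-1) := ⟨by omega⟩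
  have hd0 : (y - x) ≠ 0 := sub_ne_zero.mpr (Ne.symm hxy)
  have hd1 : 1 ≤ (y - x).val := by
    have : (y - x).val ≠ 0 := fun h => hd0 ((ZMod.val_eq_zero _).mp h)
    omega
  have hdn : (y - x).val < 3*k-1 := ZMod.val_lt _
  have hnot : (y - x).val ∉ Finset.Icc k (2*k-1) := by
    intro h
    exact hadj (adj_of_val hk h)
  rw [Finset.mem_Icc] at hnot
  rcases le_or_gt (y - x).val (k-1) with hcase | hcase
  · exact core hk x y hd1 hcase
  · have hd2k : 2*k ≤ (y - x).val := by omega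
    haveI : NeZero (y - x) := ⟨hd0⟩
    have hxyval : (x - y).val = 3*k-1 - (y - x).val := by
      have hneg : x - y = -(y - x) := by ring
      rw [hneg, ZMod.val_neg_of_ne_zero]
    obtain ⟨P, hP⟩ := core hk y x (by omega) (by rw [hxyval]; omega)
    refine ⟨fun i => (P i).reverse, ?_⟩
    intro i j hij v hvi hvj
    simp only [Path.reverse, Walk.support_reverse, List.mem_reverse] at hvi hvj
    rcases hP i j hij v hvi hvj with h | h
    · exact Or.inr h
    · exact Or.inl h

end Stmt5Aux

open Stmt5Aux in
/-- For every `k ≥ 2` the circulant graph has vertex-connectivity exactly `k`;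
in particular, between any two distinct nonadjacent vertices there exist `k` pairwise
internally vertex-disjoint paths. -/
theorem stmt5 (k : ℕ) (hk : 2 ≤ k) :
    HasVertexConnectivity (paperCirculant k) k ∧
      ∀ x y : ZMod (3 * k - 1), x ≠ y → ¬(paperCirculant k).Adj x y →
        ∃ P : Fin k → (paperCirculant k).Path x y,
          ∀ i j : Fin k, i ≠ j →
            ∀ v, v ∈ (P i).1.support → v ∈ (P j).1.support → v = x ∨ v = y := by
  haveI : NeZero (3*k-1) := ⟨by omega⟩
  refine ⟨⟨?_, ?_⟩, fun x y hxy hadj => part2 hk x y hxy hadj⟩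
  · -- upper bound: remove the neighborhood of 0
    refine ⟨↑((Finset.Icc k (2*k-1)).image (Nat.cast : ℕ → ZMod (3*k-1))), ?_, ?_⟩
    · rw [Set.ncard_coe_finset, Finset.card_image_of_injOn, Nat.card_Icc]
      · omega
      · intro a ha b hb h
        simp only [Finset.mem_coe, Finset.mem_Icc] at ha hb
        exact cast_inj_of_lt hk (by omega) (by omega) h
    · intro hconn
      set S : Set (ZMod (3*k-1)) :=
        ↑((Finset.Icc k (2*k-1)).image (Nat.cast : ℕ → ZMod (3*k-1))) with hS
      have hmem : ∀ a : ℕ, a < 3*k-1 → (((a : ℕ) : ZMod (3*k-1)) ∈ S ↔ k ≤ a ∧ a ≤ 2*k-1) := by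
        intro a ha
        simp only [hS, Finset.coe_image, Set.mem_image, Finset.mem_coe, Finset.mem_Icc]
        constructor
        · rintro ⟨b, hb, hba⟩
          have := cast_inj_of_lt hk (by omega) ha hba
          omega
        · intro h; exact ⟨a, h, rfl⟩
      have h0 : (0 : ZMod (3*k-1)) ∈ Sᶜ := by
        intro h
        have : (((0:ℕ) : ZMod (3*k-1)) ∈ S) := by simpa using h
        rw [hmem 0 (by omega)] at this
        omega
      have h1 : (1 : ZMod (3*k-1)) ∈ Sᶜ := by
        intro h
        have : (((1:ℕ) : ZMod (3*k-1)) ∈ S) := by simpa using h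
        rw [hmem 1 (by omega)] at this
        omega
      have hiso : ∀ m : ↥(Sᶜ), ¬((paperCirculant k).induce Sᶜ).Adj ⟨0, h0⟩ m := by
        intro m h
        have hadj : (paperCirculant k).Adj 0 m.1 := by
          simpa [comap_adj] using h
        rw [paperCirculant, SimpleGraph.fromRel_adj] at hadj
        obtain ⟨hne, hrel⟩ := hadj
        have hm0 : m.1 ≠ 0 := Ne.symm hne
        haveI : NeZero m.1 := ⟨hm0⟩
        have hmval : k ≤ m.1.val ∧ m.1.val ≤ 2*k-1 := by
          rcases hrel with h' | h'
          · rw [sub_zero, Finset.mem_Icc] at h'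
            exact h'
          · rw [zero_sub, ZMod.val_neg_of_ne_zero, Finset.mem_Icc] at h'
            have hv1 : 1 ≤ m.1.val := by
              have : m.1.val ≠ 0 := fun hh => hm0 ((ZMod.val_eq_zero _).mp hh)
              omega
            have hv2 : m.1.val < 3*k-1 := ZMod.val_lt _
            omega
        have : m.1 ∈ S := by
          have hcast : ((m.1.val : ℕ) : ZMod (3*k-1)) = m.1 := ZMod.natCast_rightInverse _
          rw [← hcast, hmem m.1.val (ZMod.val_lt _)]
          exact hmval
        exact m.2 this
      have heq : (⟨(0 : ZMod (3*k-1)), h0⟩ : ↥(Sᶜ)) = ⟨1, h1⟩ :=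
        eq_of_reachable_of_isolated hiso (hconn.preconnected _ _)
      have h01 : (((0:ℕ)) : ZMod (3*k-1)) = ((1:ℕ) : ZMod (3*k-1)) := by
        simpa using congrArg Subtype.val heq
      have := cast_inj_of_lt hk (by omega) (by omega) h01
      omega
  · -- lower bound
    intro S hS
    rw [connected_iff]
    constructor
    · -- preconnected
      rintro ⟨a, ha⟩ ⟨b, hb⟩
      by_cases hab : a = b
      · subst hab; rfl
      by_cases hadj : (paperCirculant k).Adj a b
      · exact Adj.reachable (by simp [comap_adj, hadj])
      obtain ⟨P, hP⟩ := part2 hk a b hab hadj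
      have hsurv : ∃ i : Fin k, ∀ w ∈ (P i).1.support, w ∉ S := by
        by_contra hc
        push_neg at hc
        choose f hf1 hf2 using hc
        have finj : Function.Injective f := by
          intro i j hijf
          by_contra hij
          rcases hP i j hij (f i) (hf1 i) (hijf ▸ hf1 j) with h | h
          · exact ha (h ▸ hf2 i)
          · exact hb (h ▸ hf2 i)
        have hle : k ≤ S.ncard := by
          have := Nat.card_le_card_of_injective
            (fun i : Fin k => (⟨f i, hf2 i⟩ : S))
            (fun i j h => finj (congrArg Subtype.val h))
          simpa [Nat.card_eq_fintype_card, Nat.card_coe_set_eq] using this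
        omega
      obtain ⟨i, hi⟩ := hsurv
      exact reach_induce Sᶜ (P i).1 (fun w hw => hi w hw) ha hb
    · -- nonempty
      by_contra hne
      rw [not_nonempty_iff] at hne
      have : Sᶜ = ∅ := by
        ext v
        simp only [Set.mem_empty_iff_false, iff_false]
        intro hv
        exact hne.elim' ⟨v, hv⟩
      have hSu : S = Set.univ := by
        rw [← compl_compl S, this, Set.compl_empty]
      rw [hSu, Set.ncard_univ, Nat.card_eq_fintype_card, ZMod.card] at hS
      omega
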